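/- Let Ψ̄_id be N×N diagonal positive definite, Ψ̄_f K×K diagonal positive definite, and W ∈ ℝ^{N×K} of full column rank. Suppose G_t = (α_t Ψ̄_id + β_t W Ψ̄_f Wᵀ)^{-1} with α_t, β_t > 0 and Σ_t α_t = Σ_t β_t = 1. Then the optimal execution schedule satisfies v_t* = G_t^{-1}(Σ_s G_s^{-1})^{-1} x₀ = α_t x₀ + (β_t − α_t) · W (Ψ̄_f^{-1} + Wᵀ Ψ̄_id^{-1} W)^{-1} Wᵀ Ψ̄_id^{-1} x₀. -/
import Mathlib


open Matrix Finset

/-- Under structured intraday variation `G_t = (α_t Ψ̄id + β_t W Ψ̄f Wᵀ)⁻¹` with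
`Σ α_t = Σ β_t = 1`, the optimal schedule is
`v_t* = α_t x₀ + (β_t − α_t) W (Ψ̄f⁻¹ + Wᵀ Ψ̄id⁻¹ W)⁻¹ Wᵀ Ψ̄id⁻¹ x₀`. -/
theorem stmt9 {N K T : ℕ}
    (ψid : Fin N → ℝ) (hψid : ∀ i, 0 < ψid i)
    (ψf : Fin K → ℝ) (hψf : ∀ k, 0 < ψf k)
    (W : Matrix (Fin N) (Fin K) ℝ) (hW : LinearIndependent ℝ Wᵀ)
    (α β : Fin T → ℝ) (hα : ∀ t, 0 < α t) (hβ : ∀ t, 0 < β t)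
    (hαsum : ∑ t, α t = 1) (hβsum : ∑ t, β t = 1)
    (G : Fin T → Matrix (Fin N) (Fin N) ℝ)
    (hGdef : ∀ t, G t = (α t • diagonal ψid + β t • (W * diagonal ψf * Wᵀ))⁻¹)
    (x₀ : Fin N → ℝ) :
    ∀ t, (G t)⁻¹ *ᵥ ((∑ s, (G s)⁻¹)⁻¹ *ᵥ x₀) =
      α t • x₀ + (β t - α t) •
        ((W * ((diagonal ψf)⁻¹ + Wᵀ * (diagonal ψid)⁻¹ * W)⁻¹ * Wᵀ * (diagonal ψid)⁻¹) *ᵥ x₀) := by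
  intro t
  set A : Matrix (Fin N) (Fin N) ℝ := diagonal ψid with hA'
  set F : Matrix (Fin K) (Fin K) ℝ := diagonal ψf with hF'
  set B : Matrix (Fin N) (Fin N) ℝ := W * F * Wᵀ with hB'
  have hApd : A.PosDef := .diagonal hψid
  have hFpd : F.PosDef := .diagonal hψf
  have hBpsd : B.PosSemidef := by
    simpa [hB', conjTranspose_eq_transpose_of_trivial] using
      hFpd.posSemidef.mul_mul_conjTranspose_same W
  -- positive-definiteness of each αₛ•A + βₛ•B
  have hMpd : ∀ s : Fin T, (α s • A + β s • B).PosDef := by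
    intro s
    have h1 : (α s • A) = diagonal (fun i => α s * ψid i) := by
      rw [hA', show (fun i => α s * ψid i) = α s • ψid from rfl, diagonal_smul]
    have h2 : (β s • B) = W * diagonal (fun k => β s * ψf k) * Wᵀ := by
      rw [hB', hF', show (fun k => β s * ψf k) = β s • ψf from rfl, diagonal_smul,
        Matrix.mul_smul, Matrix.smul_mul]
    rw [h1, h2]
    refine Matrix.PosDef.add_posSemidef (.diagonal fun i => mul_pos (hα s) (hψid i)) ?_
    simpa [conjTranspose_eq_transpose_of_trivial] using
      (Matrix.PosDef.diagonal fun k => mul_pos (hβ s) (hψf k)).posSemidef.mul_mul_conjTranspose_same W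
  have hGinv : ∀ s : Fin T, (G s)⁻¹ = α s • A + β s • B := by
    intro s
    rw [hGdef s]
    exact nonsing_inv_nonsing_inv _ ((isUnit_iff_isUnit_det _).mp (hMpd s).isUnit)
  have hSum : (∑ s, (G s)⁻¹) = A + B := by
    simp only [hGinv]
    rw [Finset.sum_add_distrib, ← Finset.sum_smul, ← Finset.sum_smul, hαsum, hβsum,
      one_smul, one_smul]
  have hABpd : (A + B).PosDef := hApd.add_posSemidef hBpsd
  have hABdet : IsUnit (A + B).det := (isUnit_iff_isUnit_det _).mp hABpd.isUnit
  have hAdet : IsUnit A.det := (isUnit_iff_isUnit_det _).mp hApd.isUnit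
  have hFdet : IsUnit F.det := (isUnit_iff_isUnit_det _).mp hFpd.isUnit
  set C : Matrix (Fin K) (Fin K) ℝ := F⁻¹ + Wᵀ * A⁻¹ * W with hC'
  have hCpd : C.PosDef := by
    refine Matrix.PosDef.add_posSemidef hFpd.inv ?_
    simpa [conjTranspose_eq_transpose_of_trivial] using
      hApd.inv.posSemidef.conjTranspose_mul_mul_same W
  have hCdet : IsUnit C.det := (isUnit_iff_isUnit_det _).mp hCpd.isUnit
  have hA1 : A⁻¹ * A = 1 := nonsing_inv_mul _ hAdet
  have hF1 : F⁻¹ * F = 1 := nonsing_inv_mul _ hFdet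
  have hC1 : C⁻¹ * C = 1 := nonsing_inv_mul _ hCdet
  have hWAW : Wᵀ * A⁻¹ * W = C - F⁻¹ := by rw [hC', add_sub_cancel_left]
  have key : W * C⁻¹ * Wᵀ * A⁻¹ * (A + B) = B := by
    have h2' : Wᵀ * A⁻¹ * (A + B) = C * (F * Wᵀ) := by
      rw [Matrix.mul_add, Matrix.mul_assoc Wᵀ A⁻¹ A, hA1, Matrix.mul_one, hB', hC',
        Matrix.add_mul, ← Matrix.mul_assoc F⁻¹ F Wᵀ, hF1, Matrix.one_mul]
      simp only [Matrix.mul_assoc]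
    calc W * C⁻¹ * Wᵀ * A⁻¹ * (A + B) = W * C⁻¹ * (Wᵀ * A⁻¹ * (A + B)) := by
          simp only [Matrix.mul_assoc]
      _ = W * C⁻¹ * (C * (F * Wᵀ)) := by rw [h2']
      _ = W * ((C⁻¹ * C) * (F * Wᵀ)) := by simp only [Matrix.mul_assoc]
      _ = B := by rw [hC1, Matrix.one_mul, hB', Matrix.mul_assoc]
  have hBinv : B * (A + B)⁻¹ = W * C⁻¹ * Wᵀ * A⁻¹ := by
    calc B * (A + B)⁻¹ = (W * C⁻¹ * Wᵀ * A⁻¹ * (A + B)) * (A + B)⁻¹ := by rw [key]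
      _ = W * C⁻¹ * Wᵀ * A⁻¹ * ((A + B) * (A + B)⁻¹) := by rw [mul_assoc]
      _ = W * C⁻¹ * Wᵀ * A⁻¹ := by rw [mul_nonsing_inv _ hABdet, mul_one]
  have hdecomp : α t • A + β t • B = α t • (A + B) + (β t - α t) • B := by module
  have hmul : (G t)⁻¹ * (∑ s, (G s)⁻¹)⁻¹
      = α t • (1 : Matrix (Fin N) (Fin N) ℝ) + (β t - α t) • (W * C⁻¹ * Wᵀ * A⁻¹) := by
    rw [hSum, hGinv t, hdecomp, add_mul, smul_mul_assoc, smul_mul_assoc,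
      mul_nonsing_inv _ hABdet, hBinv]
  rw [mulVec_mulVec, hmul, add_mulVec, smul_mulVec, smul_mulVec, one_mulVec]
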